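/- Let M_1, …, M_l ∈ ℝ^{d×d} each be (κ,γ)-strongly stable matrices, and let t_1 < t_2 < … < t_{l+1} be integers with τ := min_i (t_{i+1} − t_i) ≥ γ⁻¹ log(2κ). Given vectors w_t ∈ ℝ^d and an initial state x_{t_1} ∈ ℝ^d, define the trajectory by x_{t+1} = M_i x_t + w_t for t_i ≤ t < t_{i+1} (for each i = 1,…,l). Let W = max_{t_1 ≤ t < t_{l+1}} ‖w_t‖. Then for every t with t_1 ≤ t ≤ t_{l+1}, ‖x_t‖ ≤ 3κ · max{ ‖x_{t_1}‖/2, (κ/γ)·W }, where ‖·‖ on vectors is the Euclidean norm. -/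

import Mathlib

noncomputable section

/-- The operator (spectral) norm of a real matrix: the operator norm of the induced
linear map between Euclidean spaces. -/
def opNorm {m n : ℕ} (A : Matrix (Fin m) (Fin n) ℝ) : ℝ :=
  ‖LinearMap.toContinuousLinearMap (Matrix.toEuclideanLin A)‖

/-- Euclidean norm of a vector in `ℝ^d`. -/
def vnorm {d : ℕ} (x : Fin d → ℝ) : ℝ := Real.sqrt (∑ i, x i ^ 2)

/-- A matrix `M` is `(κ,γ)`-strongly stable (for `κ ≥ 1` and `0 < γ ≤ 1`) if
`M = H L H⁻¹` for some invertible `H` and some `L` with `‖L‖ ≤ 1 − γ` and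
`‖H‖·‖H⁻¹‖ ≤ κ`, where `‖·‖` is the operator (spectral) norm. -/
def StronglyStable {d : ℕ} (κ γ : ℝ) (M : Matrix (Fin d) (Fin d) ℝ) : Prop :=
  1 ≤ κ ∧ 0 < γ ∧ γ ≤ 1 ∧
    ∃ H L : Matrix (Fin d) (Fin d) ℝ, IsUnit H ∧ M = H * L * H⁻¹ ∧
      opNorm L ≤ 1 - γ ∧ opNorm H * opNorm H⁻¹ ≤ κ

lemma vnorm_eq {d : ℕ} (x : Fin d → ℝ) :
    vnorm x = ‖(WithLp.equiv 2 (Fin d → ℝ)).symm x‖ := by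
  rw [EuclideanSpace.norm_eq]
  simp [vnorm, Real.norm_eq_abs, sq_abs]

lemma vnorm_nonneg {d : ℕ} (x : Fin d → ℝ) : 0 ≤ vnorm x := Real.sqrt_nonneg _

lemma vnorm_add_le {d : ℕ} (x y : Fin d → ℝ) : vnorm (x + y) ≤ vnorm x + vnorm y := by
  rw [vnorm_eq, vnorm_eq, vnorm_eq]
  exact norm_add_le ((WithLp.equiv 2 (Fin d → ℝ)).symm x) ((WithLp.equiv 2 (Fin d → ℝ)).symm y)

lemma opNorm_nonneg {m n : ℕ} (A : Matrix (Fin m) (Fin n) ℝ) : 0 ≤ opNorm A :=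
  norm_nonneg _

lemma vnorm_mulVec_le {m n : ℕ} (A : Matrix (Fin m) (Fin n) ℝ) (v : Fin n → ℝ) :
    vnorm (A.mulVec v) ≤ opNorm A * vnorm v := by
  rw [vnorm_eq, vnorm_eq, opNorm]
  have h : (WithLp.equiv 2 (Fin m → ℝ)).symm (A.mulVec v)
      = LinearMap.toContinuousLinearMap (Matrix.toEuclideanLin A)
        ((WithLp.equiv 2 (Fin n → ℝ)).symm v) := by
    rw [LinearMap.coe_toContinuousLinearMap', WithLp.equiv_symm_apply, WithLp.equiv_symm_apply,
      Matrix.toEuclideanLin_apply_piLp_toLp]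
  rw [h]
  exact ContinuousLinearMap.le_opNorm _ _

/-- **Lemma (state bound under a sequence of strongly stable controllers).**
Let `M_1, …, M_l` be `(κ,γ)`-strongly stable matrices, let `t_1 < … < t_{l+1}` with
`τ := min_i (t_{i+1} − t_i) ≥ γ⁻¹ log(2κ)`, and let the trajectory satisfy
`x_{t+1} = M_i x_t + w_t` for `t_i ≤ t < t_{i+1}`.  With
`W = max_{t_1 ≤ t < t_{l+1}} ‖w_t‖`, for every `t_1 ≤ t ≤ t_{l+1}`:
`‖x_t‖ ≤ 3κ·max{‖x_{t_1}‖/2, (κ/γ)·W}` (Euclidean norms). -/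
theorem state_bound_multi_controller (d l : ℕ) (hl : 0 < l) (κ γ : ℝ)
    (M : Fin l → Matrix (Fin d) (Fin d) ℝ) (hM : ∀ i, StronglyStable κ γ (M i))
    (ti : Fin (l + 1) → ℕ) (hti : StrictMono ti)
    (hτ : ∀ i : Fin l, Real.log (2 * κ) / γ ≤ (ti i.succ : ℝ) - (ti i.castSucc : ℝ))
    (x w : ℕ → Fin d → ℝ)
    (hx : ∀ i : Fin l, ∀ t, ti i.castSucc ≤ t → t < ti i.succ →
      x (t + 1) = (M i).mulVec (x t) + w t) :
    ∀ t, ti 0 ≤ t → t ≤ ti (Fin.last l) →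
      vnorm (x t) ≤ 3 * κ * max (vnorm (x (ti 0)) / 2)
        ((κ / γ) * ⨆ s ∈ Finset.Ico (ti 0) (ti (Fin.last l)), vnorm (w s)) := by
  obtain ⟨hκ, hγ, hγ1, -⟩ := hM ⟨0, hl⟩
  have hκ0 : (0:ℝ) < κ := lt_of_lt_of_le one_pos hκ
  set S := Finset.Ico (ti 0) (ti (Fin.last l)) with hS
  set W := ⨆ s ∈ S, vnorm (w s) with hWdef
  -- properties of W
  have hg0 : ∀ s : ℕ, 0 ≤ ⨆ _ : s ∈ S, vnorm (w s) := by
    intro s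
    exact Real.iSup_nonneg (fun _ => vnorm_nonneg _)
  have hW0 : 0 ≤ W := Real.iSup_nonneg hg0
  have hbdd : BddAbove (Set.range fun s => ⨆ _ : s ∈ S, vnorm (w s)) := by
    refine ⟨∑ s ∈ S, vnorm (w s), ?_⟩
    rintro r ⟨s, rfl⟩
    show (⨆ _ : s ∈ S, vnorm (w s)) ≤ ∑ s ∈ S, vnorm (w s)
    by_cases hs : s ∈ S
    · rw [ciSup_pos hs]
      exact Finset.single_le_sum (fun t _ => vnorm_nonneg (w t)) hs
    · haveI : IsEmpty (s ∈ S) := ⟨hs⟩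
      rw [Real.iSup_of_isEmpty]
      exact Finset.sum_nonneg fun t _ => vnorm_nonneg (w t)
  have hWs : ∀ s : ℕ, ti 0 ≤ s → s < ti (Fin.last l) → vnorm (w s) ≤ W := by
    intro s h1 h2
    have hs : s ∈ S := Finset.mem_Ico.mpr ⟨h1, h2⟩
    have := le_ciSup hbdd s
    rwa [ciSup_pos hs] at this
  set B := max (vnorm (x (ti 0)) / 2) ((κ / γ) * W) with hBdef
  have hB0 : 0 ≤ B := le_trans (mul_nonneg (div_nonneg hκ0.le hγ.le) hW0) (le_max_right _ _)
  have hBW : (κ / γ) * W ≤ B := le_max_right _ _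
  -- segment bound
  have segA : ∀ i : Fin l, ∀ t, ti i.castSucc ≤ t → t ≤ ti i.succ →
      vnorm (x t) ≤ κ * (1 - γ) ^ (t - ti i.castSucc) * vnorm (x (ti i.castSucc))
        + (κ / γ) * W := by
    intro i
    obtain ⟨-, -, -, H, L, hH, hMeq, hL, hHH⟩ := hM i
    have hdet : IsUnit H.det := (Matrix.isUnit_iff_isUnit_det H).mp hH
    have hinvH : H⁻¹ * H = 1 := Matrix.nonsing_inv_mul H hdet
    have hHinv : H * H⁻¹ = 1 := Matrix.mul_nonsing_inv H hdet
    have hLHi : H⁻¹ * M i = L * H⁻¹ := by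
      rw [hMeq, ← mul_assoc, ← mul_assoc, hinvH, one_mul]
    have nH : 0 ≤ opNorm H := opNorm_nonneg H
    have nHi : 0 ≤ opNorm H⁻¹ := opNorm_nonneg H⁻¹
    have nL0 : 0 ≤ 1 - γ := by linarith
    -- bound on the transformed trajectory
    have key : ∀ t, ti i.castSucc ≤ t → t ≤ ti i.succ →
        vnorm (H⁻¹.mulVec (x t)) ≤ (1 - γ) ^ (t - ti i.castSucc)
          * vnorm (H⁻¹.mulVec (x (ti i.castSucc))) + opNorm H⁻¹ * W / γ := by
      intro t ht
      induction t, ht using Nat.le_induction with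
      | base =>
        intro _
        simp only [Nat.sub_self, pow_zero, one_mul]
        have : 0 ≤ opNorm H⁻¹ * W / γ := div_nonneg (mul_nonneg nHi hW0) hγ.le
        linarith
      | succ t ht ih =>
        intro hlt
        have hlt' : t < ti i.succ := hlt
        have ih' := ih (le_of_lt hlt')
        have hxw : H⁻¹.mulVec (x (t + 1))
            = L.mulVec (H⁻¹.mulVec (x t)) + H⁻¹.mulVec (w t) := by
          rw [hx i t ht hlt', Matrix.mulVec_add, Matrix.mulVec_mulVec, hLHi,
            ← Matrix.mulVec_mulVec]
        have hwt : vnorm (w t) ≤ W := by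
          refine hWs t ?_ ?_
          · exact le_trans (hti.monotone (Fin.zero_le _)) ht
          · exact lt_of_lt_of_le hlt' (hti.monotone (Fin.le_last _))
        have h1 : vnorm (H⁻¹.mulVec (x (t + 1)))
            ≤ (1 - γ) * vnorm (H⁻¹.mulVec (x t)) + opNorm H⁻¹ * W := by
          rw [hxw]
          refine le_trans (vnorm_add_le _ _) ?_
          have a1 : vnorm (L.mulVec (H⁻¹.mulVec (x t)))
              ≤ (1 - γ) * vnorm (H⁻¹.mulVec (x t)) :=
            le_trans (vnorm_mulVec_le _ _)
              (mul_le_mul_of_nonneg_right hL (vnorm_nonneg _))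
          have a2 : vnorm (H⁻¹.mulVec (w t)) ≤ opNorm H⁻¹ * W :=
            le_trans (vnorm_mulVec_le _ _) (mul_le_mul_of_nonneg_left hwt nHi)
          linarith
        have hexp : t + 1 - ti i.castSucc = (t - ti i.castSucc) + 1 := by omega
        rw [hexp, pow_succ]
        have h2 : (1 - γ) * vnorm (H⁻¹.mulVec (x t))
            ≤ (1 - γ) * ((1 - γ) ^ (t - ti i.castSucc)
              * vnorm (H⁻¹.mulVec (x (ti i.castSucc))) + opNorm H⁻¹ * W / γ) :=
          mul_le_mul_of_nonneg_left ih' nL0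
        have h3 : (1 - γ) * (opNorm H⁻¹ * W / γ) + opNorm H⁻¹ * W ≤ opNorm H⁻¹ * W / γ := by
          have hγne : γ ≠ 0 := ne_of_gt hγ
          have he : (1 - γ) * (opNorm H⁻¹ * W / γ) + opNorm H⁻¹ * W = opNorm H⁻¹ * W / γ := by
            field_simp
            ring
          linarith [he.le]
        nlinarith [h1, h2, h3]
    intro t ht ht'
    have hk := key t ht ht'
    have hx0 : x t = H.mulVec (H⁻¹.mulVec (x t)) := by
      rw [Matrix.mulVec_mulVec, hHinv, Matrix.one_mulVec]
    have h5 : vnorm (x t) ≤ opNorm H * vnorm (H⁻¹.mulVec (x t)) := by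
      conv_lhs => rw [hx0]
      exact vnorm_mulVec_le _ _
    have h6 : vnorm (H⁻¹.mulVec (x (ti i.castSucc)))
        ≤ opNorm H⁻¹ * vnorm (x (ti i.castSucc)) := vnorm_mulVec_le _ _
    set p := (1 - γ) ^ (t - ti i.castSucc) with hp
    have hp0 : 0 ≤ p := pow_nonneg (by linarith) _
    have hv0 : 0 ≤ vnorm (x (ti i.castSucc)) := vnorm_nonneg _
    have c1 : opNorm H * (p * vnorm (H⁻¹.mulVec (x (ti i.castSucc))))
        ≤ opNorm H * (p * (opNorm H⁻¹ * vnorm (x (ti i.castSucc)))) :=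
      mul_le_mul_of_nonneg_left (mul_le_mul_of_nonneg_left h6 hp0) nH
    have c2 : opNorm H * opNorm H⁻¹ * (p * vnorm (x (ti i.castSucc)))
        ≤ κ * (p * vnorm (x (ti i.castSucc))) :=
      mul_le_mul_of_nonneg_right hHH (mul_nonneg hp0 hv0)
    have c3 : opNorm H * opNorm H⁻¹ * (W / γ) ≤ κ * (W / γ) :=
      mul_le_mul_of_nonneg_right hHH (div_nonneg hW0 hγ.le)
    have c4 : vnorm (H⁻¹.mulVec (x t)) ≤ p * vnorm (H⁻¹.mulVec (x (ti i.castSucc)))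
        + opNorm H⁻¹ * W / γ := hk
    have c5 : opNorm H * vnorm (H⁻¹.mulVec (x t))
        ≤ opNorm H * (p * vnorm (H⁻¹.mulVec (x (ti i.castSucc))) + opNorm H⁻¹ * W / γ) :=
      mul_le_mul_of_nonneg_left c4 nH
    have e1 : opNorm H * (p * (opNorm H⁻¹ * vnorm (x (ti i.castSucc))))
        = opNorm H * opNorm H⁻¹ * (p * vnorm (x (ti i.castSucc))) := by ring
    have e2 : opNorm H * (opNorm H⁻¹ * W / γ) = opNorm H * opNorm H⁻¹ * (W / γ) := by ring
    have e3 : κ * (W / γ) = (κ / γ) * W := by ring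
    have e4 : κ * (p * vnorm (x (ti i.castSucc))) = κ * p * vnorm (x (ti i.castSucc)) := by
      ring
    nlinarith [c1, c2, c3, c5]
  -- decay across a full segment
  have hdec : ∀ i : Fin l, κ * (1 - γ) ^ (ti i.succ - ti i.castSucc) ≤ 1 / 2 := by
    intro i
    have hlt : ti i.castSucc < ti i.succ := hti (Fin.castSucc_lt_succ (i := i))
    have hcast : ((ti i.succ - ti i.castSucc : ℕ) : ℝ)
        = (ti i.succ : ℝ) - (ti i.castSucc : ℝ) := by
      push_cast [Nat.cast_sub hlt.le]; ring
    set n := ti i.succ - ti i.castSucc with hn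
    have h1 : Real.log (2 * κ) ≤ γ * n := by
      have h := hτ i
      rw [div_le_iff₀ hγ] at h
      rw [hcast]
      nlinarith
    have h2 : (1 - γ) ^ n ≤ Real.exp (-(γ * n)) := by
      calc (1 - γ) ^ n ≤ Real.exp (-γ) ^ n := by
            refine pow_le_pow_left₀ (by linarith) ?_ n
            linarith [Real.add_one_le_exp (-γ)]
        _ = Real.exp (-(γ * n)) := by
            rw [← Real.exp_nat_mul]; congr 1; ring
    have h3 : Real.exp (-(γ * n)) ≤ Real.exp (-Real.log (2 * κ)) :=
      Real.exp_le_exp.mpr (by linarith)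
    have h4 : Real.exp (-Real.log (2 * κ)) = (2 * κ)⁻¹ := by
      rw [Real.exp_neg, Real.exp_log (by linarith)]
    have h5 : (1 - γ) ^ n ≤ (2 * κ)⁻¹ := by rw [← h4]; linarith
    have h6 : κ * (2 * κ)⁻¹ = 1 / 2 := by
      field_simp
    calc κ * (1 - γ) ^ n ≤ κ * (2 * κ)⁻¹ := mul_le_mul_of_nonneg_left h5 hκ0.le
      _ = 1 / 2 := h6
  -- endpoints bound
  have hC : ∀ i : Fin (l + 1), vnorm (x (ti i)) ≤ 2 * B := by
    intro i
    induction i using Fin.induction with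
    | zero =>
      have : vnorm (x (ti 0)) / 2 ≤ B := le_max_left _ _
      linarith
    | succ i ih =>
      have h := segA i (ti i.succ) (hti (Fin.castSucc_lt_succ (i := i))).le le_rfl
      have hd := hdec i
      have hv0 : 0 ≤ vnorm (x (ti i.castSucc)) := vnorm_nonneg _
      have h7 : κ * (1 - γ) ^ (ti i.succ - ti i.castSucc) * vnorm (x (ti i.castSucc))
          ≤ (1 / 2) * (2 * B) :=
        mul_le_mul hd ih hv0 (by norm_num)
      linarith
  -- main bound, by induction on segments
  have main : ∀ i : Fin (l + 1), ∀ t, ti 0 ≤ t → t ≤ ti i → vnorm (x t) ≤ 3 * κ * B := by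
    intro i
    induction i using Fin.induction with
    | zero =>
      intro t h1 h2
      have : t = ti 0 := le_antisymm h2 h1
      subst this
      have h9 := hC 0
      have h10 : 0 ≤ (3 * κ - 2) * B := mul_nonneg (by linarith) hB0
      linarith
    | succ i ih =>
      intro t h1 h2
      by_cases hc : t ≤ ti i.castSucc
      · exact ih t h1 hc
      · push_neg at hc
        have h := segA i t hc.le h2
        have hp1 : (1 - γ) ^ (t - ti i.castSucc) ≤ 1 :=
          pow_le_one₀ (by linarith) (by linarith)
        have hp0 : 0 ≤ (1 - γ) ^ (t - ti i.castSucc) := pow_nonneg (by linarith) _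
        have hv := hC i.castSucc
        have hv0 : 0 ≤ vnorm (x (ti i.castSucc)) := vnorm_nonneg _
        have h8 : κ * (1 - γ) ^ (t - ti i.castSucc) * vnorm (x (ti i.castSucc))
            ≤ κ * (2 * B) := by
          calc κ * (1 - γ) ^ (t - ti i.castSucc) * vnorm (x (ti i.castSucc))
              ≤ κ * 1 * vnorm (x (ti i.castSucc)) := by
                refine mul_le_mul_of_nonneg_right ?_ hv0
                exact mul_le_mul_of_nonneg_left hp1 hκ0.le
            _ = κ * vnorm (x (ti i.castSucc)) := by ring
            _ ≤ κ * (2 * B) := mul_le_mul_of_nonneg_left hv hκ0.le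
        have h10 : 0 ≤ (κ - 1) * B := mul_nonneg (by linarith) hB0
        linarith
  intro t h1 h2
  exact main (Fin.last l) t h1 h2

end
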